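/- arXiv:1110.0139 — 4 statements merged into one kernel-verified Lean document; each statement's English description precedes it below -/
import Mathlib

section
/- Let (x_{n,m}) be a double sequence of real numbers and σ ∈ (0,1]. Then i(x_{n,m}; L) ≥ σ if and only if there exists a subset K ⊆ ℕ² with δ₋(K) ≥ σ such that the subsequence of (x_{n,m}) indexed by K converges to L (i.e., for every ε > 0 all but finitely many indices (n,m) ∈ K with both coordinates large satisfy |x_{n,m} − L| < ε). -/
open Filter Set MeasureTheory
open scoped Classical Pointwise

/-- Upper density of a subset of `ℕ²`. -/
noncomputable def upperDensity2 (K : Set (ℕ × ℕ)) : ℝ :=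
  limsup (fun n : ℕ =>
    ((((Finset.Icc 1 n) ×ˢ (Finset.Icc 1 n)).filter (fun p => p ∈ K)).card : ℝ) / (n : ℝ) ^ 2)
    atTop

/-- Lower density of a subset of `ℕ²`. -/
noncomputable def lowerDensity2 (K : Set (ℕ × ℕ)) : ℝ :=
  liminf (fun n : ℕ =>
    ((((Finset.Icc 1 n) ×ˢ (Finset.Icc 1 n)).filter (fun p => p ∈ K)).card : ℝ) / (n : ℝ) ^ 2)
    atTop

/-- Upper density of a subset of `ℕ`. -/
noncomputable def upperDensity1 (K : Set ℕ) : ℝ :=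
  limsup (fun n : ℕ =>
    (((Finset.Icc 1 n).filter (fun k => k ∈ K)).card : ℝ) / (n : ℝ)) atTop

/-- Lower density of a subset of `ℕ`. -/
noncomputable def lowerDensity1 (K : Set ℕ) : ℝ :=
  liminf (fun n : ℕ =>
    (((Finset.Icc 1 n).filter (fun k => k ∈ K)).card : ℝ) / (n : ℝ)) atTop

/-- Index of convergence of a double sequence to `L ∈ ℝ`. -/
noncomputable def idx2 (x : ℕ → ℕ → ℝ) (L : ℝ) : ℝ :=
  1 - ⨆ ε > (0 : ℝ), upperDensity2 {p | x p.1 p.2 ∉ Set.Ioo (L - ε) (L + ε)}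

/-- Index of convergence of a double sequence to a set `A ⊆ ℝ`. -/
noncomputable def idxSet2 (x : ℕ → ℕ → ℝ) (A : Set ℝ) : ℝ :=
  1 - ⨆ ε > (0 : ℝ), upperDensity2 {p | x p.1 p.2 ∉ A + Set.Ioo (-ε) ε}

/-- Index of convergence of a sequence to `L ∈ ℝ`. -/
noncomputable def idx1 (x : ℕ → ℝ) (L : ℝ) : ℝ :=
  1 - ⨆ ε > (0 : ℝ), upperDensity1 {n | x n ∉ Set.Ioo (L - ε) (L + ε)}

/-- Index of convergence of a sequence to a set `A ⊆ ℝ`. -/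
noncomputable def idxSet1 (x : ℕ → ℝ) (A : Set ℝ) : ℝ :=
  1 - ⨆ ε > (0 : ℝ), upperDensity1 {n | x n ∉ A + Set.Ioo (-ε) ε}

/-- `K ⊆ ℕ` has natural density `a`. -/
def HasDensity1 (K : Set ℕ) (a : ℝ) : Prop :=
  Tendsto (fun n : ℕ =>
    (((Finset.Icc 1 n).filter (fun k => k ∈ K)).card : ℝ) / (n : ℝ)) atTop (nhds a)

/-- `K ⊆ ℕ²` has natural density `a`. -/
def HasDensity2 (K : Set (ℕ × ℕ)) (a : ℝ) : Prop :=
  Tendsto (fun n : ℕ =>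
    ((((Finset.Icc 1 n) ×ˢ (Finset.Icc 1 n)).filter (fun p => p ∈ K)).card : ℝ) / (n : ℝ) ^ 2)
    atTop (nhds a)

/-- A set `A ⊆ ℝ` is Peano–Jordan measurable. -/
def JordanMeasurable1 (A : Set ℝ) : Prop :=
  Bornology.IsBounded A ∧ volume (frontier A) = 0

/-- The Peano–Jordan measure of a Jordan measurable `A ⊆ ℝ`. -/
noncomputable def jordanMeasure1 (A : Set ℝ) : ℝ := (volume A).toReal

/-- A set `A ⊆ ℝ²` is Peano–Jordan measurable. -/
def JordanMeasurable2 (A : Set (ℝ × ℝ)) : Prop :=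
  Bornology.IsBounded A ∧ volume (frontier A) = 0

/-- The Peano–Jordan measure of a Jordan measurable `A ⊆ ℝ²`. -/
noncomputable def jordanMeasure2 (A : Set (ℝ × ℝ)) : ℝ := (volume A).toReal

namespace IndexAux

open Filter Set
open scoped Classical

noncomputable def cnt (K : Set (ℕ × ℕ)) (n : ℕ) : ℝ :=
  ((((Finset.Icc 1 n) ×ˢ (Finset.Icc 1 n)).filter (fun p => p ∈ K)).card : ℝ) / (n : ℝ) ^ 2

lemma ud_eq (K : Set (ℕ × ℕ)) : upperDensity2 K = limsup (cnt K) atTop := rfl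
lemma ld_eq (K : Set (ℕ × ℕ)) : lowerDensity2 K = liminf (cnt K) atTop := rfl

lemma card_box (n : ℕ) : ((Finset.Icc 1 n) ×ˢ (Finset.Icc 1 n)).card = n * n := by
  simp [Finset.card_product, Nat.card_Icc]

lemma cnt_nonneg (K : Set (ℕ × ℕ)) (n : ℕ) : 0 ≤ cnt K n := by
  unfold cnt; positivity

lemma cnt_le_one (K : Set (ℕ × ℕ)) (n : ℕ) : cnt K n ≤ 1 := by
  rcases Nat.eq_zero_or_pos n with h | h
  · simp [cnt, h]
  · have hn : (0:ℝ) < (n:ℝ) := by exact_mod_cast h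
    rw [cnt, div_le_one (by positivity)]
    calc ((((Finset.Icc 1 n) ×ˢ (Finset.Icc 1 n)).filter (fun p => p ∈ K)).card : ℝ)
        ≤ (((Finset.Icc 1 n) ×ˢ (Finset.Icc 1 n)).card : ℝ) := by
          exact_mod_cast Finset.card_filter_le _ _
      _ = (n : ℝ) ^ 2 := by rw [card_box]; push_cast; ring

lemma bddA (K : Set (ℕ × ℕ)) : IsBoundedUnder (· ≤ ·) atTop (cnt K) :=
  isBoundedUnder_of ⟨1, fun n => cnt_le_one K n⟩

lemma bddB (K : Set (ℕ × ℕ)) : IsBoundedUnder (· ≥ ·) atTop (cnt K) :=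
  isBoundedUnder_of ⟨0, fun n => cnt_nonneg K n⟩

lemma ud_le_one (K : Set (ℕ × ℕ)) : upperDensity2 K ≤ 1 := by
  rw [ud_eq]
  exact limsup_le_of_le ((bddB K).isCoboundedUnder_le)
    (Eventually.of_forall fun n => cnt_le_one K n)

lemma le_of_forall_sub {a b : ℝ} (h : ∀ δ > (0:ℝ), a - δ ≤ b) : a ≤ b := by
  by_contra hc
  push_neg at hc
  have := h ((a - b) / 2) (by linarith)
  linarith

lemma le_of_forall_add {a b : ℝ} (h : ∀ δ > (0:ℝ), a ≤ b + δ) : a ≤ b := by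
  by_contra hc
  push_neg at hc
  have := h ((a - b) / 2) (by linarith)
  linarith

lemma cnt_compl {A B : Set (ℕ × ℕ)} (hAB : ∀ p, p ∈ A ↔ p ∉ B) {n : ℕ} (hn : 1 ≤ n) :
    cnt B n = 1 - cnt A n := by
  have hcard := Finset.card_filter_add_card_filter_not
    (s := (Finset.Icc 1 n) ×ˢ (Finset.Icc 1 n)) (p := fun p => p ∈ B)
  have hfe : ((Finset.Icc 1 n) ×ˢ (Finset.Icc 1 n)).filter (fun p => ¬ p ∈ B)
      = ((Finset.Icc 1 n) ×ˢ (Finset.Icc 1 n)).filter (fun p => p ∈ A) := by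
    apply Finset.filter_congr
    intro p _
    simp [hAB p]
  rw [hfe, card_box] at hcard
  have hn0 : (0:ℝ) < (n:ℝ) := by exact_mod_cast hn
  have hre : ((((Finset.Icc 1 n) ×ˢ (Finset.Icc 1 n)).filter (fun p => p ∈ B)).card : ℝ)
      + ((((Finset.Icc 1 n) ×ˢ (Finset.Icc 1 n)).filter (fun p => p ∈ A)).card : ℝ)
      = (n : ℝ) ^ 2 := by
    rw [sq]
    exact_mod_cast congrArg (Nat.cast : ℕ → ℝ) hcard
  rw [cnt, cnt]
  field_simp
  linarith

lemma cnt_mono {B K : Set (ℕ × ℕ)} {n : ℕ}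
    (h : ∀ p : ℕ × ℕ, p.1 ≤ n → p.2 ≤ n → p ∈ B → p ∈ K) : cnt B n ≤ cnt K n := by
  rcases Nat.eq_zero_or_pos n with h0 | h0
  · simp [cnt, h0]
  have hn0 : (0:ℝ) < (n:ℝ) := by exact_mod_cast h0
  have hp2 : (0:ℝ) < (n:ℝ) ^ 2 := by positivity
  rw [cnt, cnt, div_le_div_iff_of_pos_right hp2]
  have hsub : ((Finset.Icc 1 n) ×ˢ (Finset.Icc 1 n)).filter (fun p => p ∈ B)
      ⊆ ((Finset.Icc 1 n) ×ˢ (Finset.Icc 1 n)).filter (fun p => p ∈ K) := by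
    intro p hp
    simp only [Finset.mem_filter, Finset.mem_product, Finset.mem_Icc] at hp ⊢
    exact ⟨hp.1, h p hp.1.1.2 hp.1.2.2 hp.2⟩
  exact_mod_cast Finset.card_le_card hsub

def Aset (x : ℕ → ℕ → ℝ) (L ε : ℝ) : Set (ℕ × ℕ) :=
  {p | x p.1 p.2 ∉ Set.Ioo (L - ε) (L + ε)}

def Bset (x : ℕ → ℕ → ℝ) (L : ℝ) (j : ℕ) : Set (ℕ × ℕ) :=
  {p | |x p.1 p.2 - L| < 1 / ((j : ℝ) + 1)}

lemma mem_Aset_iff {x : ℕ → ℕ → ℝ} {L ε : ℝ} {p : ℕ × ℕ} :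
    p ∈ Aset x L ε ↔ ¬ |x p.1 p.2 - L| < ε := by
  simp only [Aset, Set.mem_setOf_eq, Set.mem_Ioo]
  rw [abs_sub_lt_iff]
  constructor
  · intro h hc
    exact h ⟨by linarith [hc.1, hc.2], by linarith [hc.1, hc.2]⟩
  · intro h hc
    exact h ⟨by linarith [hc.1, hc.2], by linarith [hc.1, hc.2]⟩

lemma key_iff (x : ℕ → ℕ → ℝ) (L σ : ℝ) (hσ1 : σ ≤ 1) :
    σ ≤ idx2 x L ↔ ∀ ε > (0:ℝ), upperDensity2 (Aset x L ε) ≤ 1 - σ := by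
  have hidx : idx2 x L = 1 - ⨆ ε > (0:ℝ), upperDensity2 (Aset x L ε) := rfl
  have hbdd : BddAbove (Set.range fun ε : ℝ => ⨆ _ : ε > 0, upperDensity2 (Aset x L ε)) := by
    refine ⟨1, ?_⟩
    rintro y ⟨ε, rfl⟩
    exact Real.iSup_le (fun _ => ud_le_one _) zero_le_one
  rw [hidx]
  constructor
  · intro h ε hε
    have h1 : upperDensity2 (Aset x L ε) ≤ ⨆ ε > (0:ℝ), upperDensity2 (Aset x L ε) := by
      rw [← ciSup_pos (p := ε > 0) (f := fun _ => upperDensity2 (Aset x L ε)) hε]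
      exact le_ciSup hbdd ε
    linarith
  · intro h
    have h1 : (⨆ ε > (0:ℝ), upperDensity2 (Aset x L ε)) ≤ 1 - σ :=
      Real.iSup_le (fun ε => Real.iSup_le (fun hε => h ε hε) (by linarith)) (by linarith)
    linarith

lemma step (x : ℕ → ℕ → ℝ) (L σ : ℝ)
    (h : ∀ ε > (0:ℝ), upperDensity2 (Aset x L ε) ≤ 1 - σ) (j : ℕ) :
    ∃ M : ℕ, ∀ n, M ≤ n → 1 ≤ n ∧ σ - 1 / ((j : ℝ) + 1) < cnt (Bset x L j) n := by
  have hε : (0:ℝ) < 1 / ((j : ℝ) + 1) := by positivity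
  have hud : limsup (cnt (Aset x L (1 / ((j:ℝ) + 1)))) atTop ≤ 1 - σ := by
    rw [← ud_eq]; exact h _ hε
  have hev : ∀ᶠ n in atTop, cnt (Aset x L (1 / ((j:ℝ) + 1))) n < 1 - σ + 1 / ((j:ℝ) + 1) :=
    eventually_lt_of_limsup_lt (lt_of_le_of_lt hud (by linarith)) (bddA _)
  have hev2 : ∀ᶠ n in atTop, 1 ≤ n ∧ σ - 1 / ((j:ℝ) + 1) < cnt (Bset x L j) n := by
    filter_upwards [hev, eventually_ge_atTop 1] with n h1 h2
    refine ⟨h2, ?_⟩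
    have hc : cnt (Bset x L j) n = 1 - cnt (Aset x L (1 / ((j:ℝ) + 1))) n :=
      cnt_compl (fun p => mem_Aset_iff) h2
    rw [hc]
    linarith
  rw [eventually_atTop] at hev2
  obtain ⟨M, hM⟩ := hev2
  exact ⟨M, hM⟩

def NN (M : ℕ → ℕ) (j : ℕ) : ℕ := (Finset.range (j + 1)).sup M + j

def hh (M : ℕ → ℕ) (m : ℕ) : ℕ := Nat.findGreatest (fun j => NN M j ≤ m) m

def Kset (x : ℕ → ℕ → ℝ) (L : ℝ) (M : ℕ → ℕ) : Set (ℕ × ℕ) :=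
  {p | |x p.1 p.2 - L| < 1 / ((hh M (max p.1 p.2) : ℝ) + 1)}

lemma mem_Kset {x : ℕ → ℕ → ℝ} {L : ℝ} {M : ℕ → ℕ} {p : ℕ × ℕ} :
    p ∈ Kset x L M ↔ |x p.1 p.2 - L| < 1 / ((hh M (max p.1 p.2) : ℝ) + 1) := Iff.rfl

lemma le_NN (M : ℕ → ℕ) (j : ℕ) : M j ≤ NN M j :=
  le_trans (Finset.le_sup (Finset.self_mem_range_succ j)) (Nat.le_add_right _ _)

lemma le_NN' (M : ℕ → ℕ) (j : ℕ) : j ≤ NN M j := Nat.le_add_left j _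

lemma hh_mono (M : ℕ → ℕ) {a b : ℕ} (hab : a ≤ b) : hh M a ≤ hh M b :=
  Nat.findGreatest_mono (fun n h => le_trans h hab) hab

end IndexAux

open IndexAux in
theorem index_ge_iff_subsequence (x : ℕ → ℕ → ℝ) (L σ : ℝ) (hσ : σ ∈ Set.Ioc (0 : ℝ) 1) :
    σ ≤ idx2 x L ↔
      ∃ K : Set (ℕ × ℕ), σ ≤ lowerDensity2 K ∧
        ∀ ε > (0 : ℝ), ∃ N : ℕ, ∀ p ∈ K, N ≤ p.1 → N ≤ p.2 → |x p.1 p.2 - L| < ε := by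
  obtain ⟨hσ0, hσ1⟩ := hσ
  rw [key_iff x L σ hσ1]
  constructor
  · intro h
    choose M hM using step x L σ h
    refine ⟨Kset x L M, ?_, ?_⟩
    · -- density
      rw [ld_eq]
      apply le_of_forall_sub
      intro δ hδ
      obtain ⟨j, hj⟩ := exists_nat_one_div_lt hδ
      apply le_liminf_of_le ((bddA _).isCoboundedUnder_ge)
      filter_upwards [eventually_ge_atTop (NN M j)] with n hn
      have hjn : j ≤ n := le_trans (le_NN' M j) hn
      have hjh : j ≤ hh M n := Nat.le_findGreatest hjn hn
      have hNh : NN M (hh M n) ≤ n := Nat.findGreatest_spec (P := fun j => NN M j ≤ n) hjn hn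
      obtain ⟨hn1, hcnt⟩ := hM (hh M n) n (le_trans (le_NN M _) hNh)
      have hmono : cnt (Bset x L (hh M n)) n ≤ cnt (Kset x L M) n := by
        apply cnt_mono
        intro p hp1 hp2 hpB
        have hmax : max p.1 p.2 ≤ n := max_le hp1 hp2
        have h1 : hh M (max p.1 p.2) ≤ hh M n := hh_mono M hmax
        have h2 : (1:ℝ) / ((hh M n : ℝ) + 1) ≤ 1 / ((hh M (max p.1 p.2) : ℝ) + 1) := by
          apply one_div_le_one_div_of_le (by positivity)
          have := Nat.succ_le_succ h1
          exact_mod_cast this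
        exact mem_Kset.mpr (lt_of_lt_of_le hpB h2)
      have hdiv : (1:ℝ) / ((hh M n : ℝ) + 1) ≤ 1 / ((j:ℝ) + 1) := by
        apply one_div_le_one_div_of_le (by positivity)
        have := Nat.succ_le_succ hjh
        exact_mod_cast this
      linarith
    · intro ε hε
      obtain ⟨j, hj⟩ := exists_nat_one_div_lt hε
      refine ⟨NN M j, ?_⟩
      intro p hp h1 h2
      have hmax : NN M j ≤ max p.1 p.2 := le_trans h1 (le_max_left _ _)
      have hjm : j ≤ max p.1 p.2 := le_trans (le_NN' M j) hmax
      have hge : j ≤ hh M (max p.1 p.2) := Nat.le_findGreatest hjm hmax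
      have hd : (1:ℝ) / ((hh M (max p.1 p.2) : ℝ) + 1) ≤ 1 / ((j:ℝ) + 1) := by
        apply one_div_le_one_div_of_le (by positivity)
        have := Nat.succ_le_succ hge
        exact_mod_cast this
      have hpK := mem_Kset.mp hp
      linarith
  · rintro ⟨K, hld, hconv⟩ ε hε
    obtain ⟨N, hN⟩ := hconv ε hε
    apply le_of_forall_add
    intro δ hδ
    have hliminf : σ ≤ liminf (cnt K) atTop := by rw [← ld_eq]; exact hld
    rw [ud_eq]
    apply limsup_le_of_le ((bddB _).isCoboundedUnder_le)
    have e1 : ∀ᶠ n in atTop, σ - δ / 2 < cnt K n :=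
      eventually_lt_of_lt_liminf (lt_of_lt_of_le (by linarith) hliminf) (bddB K)
    have e2 : ∀ᶠ n : ℕ in atTop, (2 * N : ℝ) / (n : ℝ) < δ / 2 :=
      Filter.Tendsto.eventually_lt_const (show (0:ℝ) < δ / 2 by linarith)
        (tendsto_const_div_atTop_nhds_zero_nat (2 * N : ℝ))
    filter_upwards [e1, e2, eventually_ge_atTop (max N 1)] with n h1 h2 h3
    have hn1 : 1 ≤ n := le_trans (le_max_right _ _) h3
    have hnN : N ≤ n := le_trans (le_max_left _ _) h3
    have hn0 : (0:ℝ) < (n:ℝ) := by exact_mod_cast hn1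
    set box := (Finset.Icc 1 n) ×ˢ (Finset.Icc 1 n) with hbox
    -- counting in ℕ
    have hsub : box.filter (fun p => p ∈ Aset x L ε)
        ⊆ box.filter (fun p => p ∉ K ∨ p.1 < N ∨ p.2 < N) := by
      intro p hp
      simp only [Finset.mem_filter] at hp ⊢
      refine ⟨hp.1, ?_⟩
      by_contra hc
      push_neg at hc
      obtain ⟨hK', h1', h2'⟩ := hc
      exact (mem_Aset_iff.mp hp.2) (hN p hK' (by omega) (by omega))
    have hsubc := Finset.card_le_card hsub
    have hunion : (box.filter (fun p => p ∉ K ∨ p.1 < N ∨ p.2 < N)).card ≤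
        (box.filter (fun p => p ∉ K)).card + ((box.filter (fun p => p.1 < N)).card
          + (box.filter (fun p => p.2 < N)).card) := by
      rw [Finset.filter_or, Finset.filter_or]
      calc ((box.filter (fun p => p ∉ K)) ∪ ((box.filter (fun p => p.1 < N))
              ∪ (box.filter (fun p => p.2 < N)))).card
          ≤ (box.filter (fun p => p ∉ K)).card + ((box.filter (fun p => p.1 < N))
              ∪ (box.filter (fun p => p.2 < N))).card := Finset.card_union_le _ _
        _ ≤ _ := Nat.add_le_add_left (Finset.card_union_le _ _) _
    have hb1 : (box.filter (fun p => p.1 < N)).card ≤ N * n := by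
      calc (box.filter (fun p => p.1 < N)).card
          ≤ ((Finset.range N) ×ˢ (Finset.Icc 1 n)).card := by
            apply Finset.card_le_card
            intro p hp
            simp only [hbox, Finset.mem_filter, Finset.mem_product, Finset.mem_Icc,
              Finset.mem_range] at hp ⊢
            exact ⟨hp.2, hp.1.2⟩
        _ = N * n := by simp [Finset.card_product, Nat.card_Icc]
    have hb2 : (box.filter (fun p => p.2 < N)).card ≤ N * n := by
      calc (box.filter (fun p => p.2 < N)).card
          ≤ ((Finset.Icc 1 n) ×ˢ (Finset.range N)).card := by
            apply Finset.card_le_card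
            intro p hp
            simp only [hbox, Finset.mem_filter, Finset.mem_product, Finset.mem_Icc,
              Finset.mem_range] at hp ⊢
            exact ⟨hp.1.1, hp.2⟩
        _ = N * n := by simp [Finset.card_product, Nat.card_Icc, Nat.mul_comm]
    have hcompl : (box.filter (fun p => p ∈ K)).card
        + (box.filter (fun p => p ∉ K)).card = n * n := by
      rw [← card_box n, ← hbox]
      exact Finset.card_filter_add_card_filter_not _
    have hnat : (box.filter (fun p => p ∈ Aset x L ε)).card
        + (box.filter (fun p => p ∈ K)).card ≤ n * n + (N * n + N * n) := by omega
    -- pass to ℝ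
    have hre : cnt (Aset x L ε) n + cnt K n
        ≤ ((n * n + (N * n + N * n) : ℕ) : ℝ) / (n : ℝ) ^ 2 := by
      rw [cnt, cnt, ← hbox, ← add_div, div_le_div_iff_of_pos_right (by positivity)]
      exact_mod_cast hnat
    have heq : ((n * n + (N * n + N * n) : ℕ) : ℝ) / (n : ℝ) ^ 2 = 1 + (2 * N : ℝ) / n := by
      push_cast
      field_simp
      ring
    rw [heq] at hre
    linarith
end

section
/- If a double sequence (x_{n,m}) has indices of convergence α_k to pairwise distinct points L_k (k ≥ 1, possibly ±∞) with Σ_k α_k = 1, then for every limit L different from all L_k, the index of convergence of (x_{n,m}) to L is 0. -/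
open Filter Set MeasureTheory
open scoped Classical Pointwise

/-- Index of convergence of a double sequence to a point of `[-∞,∞]`. -/
noncomputable def idx2E (x : ℕ → ℕ → ℝ) (L : EReal) : ℝ :=
  if L = ⊤ then 1 - ⨆ M : ℝ, upperDensity2 {p | ¬ x p.1 p.2 ≤ M}
  else if L = ⊥ then 1 - ⨆ M : ℝ, upperDensity2 {p | ¬ M ≤ x p.1 p.2}
  else idx2 x L.toReal

namespace IOLZ

noncomputable def dseq (K : Set (ℕ × ℕ)) (n : ℕ) : ℝ :=
  ((((Finset.Icc 1 n) ×ˢ (Finset.Icc 1 n)).filter (fun p => p ∈ K)).card : ℝ) / (n : ℝ) ^ 2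

lemma dseq_nonneg (K : Set (ℕ × ℕ)) (n : ℕ) : 0 ≤ dseq K n := by
  unfold dseq; positivity

lemma dseq_le_one (K : Set (ℕ × ℕ)) (n : ℕ) : dseq K n ≤ 1 := by
  unfold dseq
  rcases Nat.eq_zero_or_pos n with h | h
  · subst h; simp
  · rw [div_le_one (by positivity)]
    have : (((Finset.Icc 1 n) ×ˢ (Finset.Icc 1 n)).filter (fun p => p ∈ K)).card ≤ n ^ 2 := by
      calc _ ≤ ((Finset.Icc 1 n) ×ˢ (Finset.Icc 1 n)).card := Finset.card_filter_le _ _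
        _ = n ^ 2 := by rw [Finset.card_product, Nat.card_Icc]; simp [sq]
    exact_mod_cast this

lemma bddU (K : Set (ℕ × ℕ)) : IsBoundedUnder (· ≤ ·) atTop (dseq K) :=
  isBoundedUnder_of ⟨1, dseq_le_one K⟩

lemma bddL (K : Set (ℕ × ℕ)) : IsBoundedUnder (· ≥ ·) atTop (dseq K) :=
  isBoundedUnder_of ⟨0, dseq_nonneg K⟩

lemma ud_eq (K : Set (ℕ × ℕ)) : upperDensity2 K = limsup (dseq K) atTop := rfl

lemma ud_le_one (K : Set (ℕ × ℕ)) : upperDensity2 K ≤ 1 :=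
  limsup_le_of_le (bddL K).isCoboundedUnder_flip (Eventually.of_forall (dseq_le_one K))

lemma dseq_add_compl (K : Set (ℕ × ℕ)) {n : ℕ} (hn : 1 ≤ n) : dseq K n + dseq Kᶜ n = 1 := by
  have hfe : (((Finset.Icc 1 n) ×ˢ (Finset.Icc 1 n)).filter (fun p => p ∈ Kᶜ))
      = (((Finset.Icc 1 n) ×ˢ (Finset.Icc 1 n)).filter (fun p => ¬ p ∈ K)) := by
    apply Finset.filter_congr; intro p _; simp
  have hcard : (((Finset.Icc 1 n) ×ˢ (Finset.Icc 1 n)).filter (fun p => p ∈ K)).card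
      + (((Finset.Icc 1 n) ×ˢ (Finset.Icc 1 n)).filter (fun p => p ∈ Kᶜ)).card = n ^ 2 := by
    rw [hfe, Finset.card_filter_add_card_filter_not, Finset.card_product, Nat.card_Icc]
    simp [sq]
  have hn2 : (0:ℝ) < (n : ℝ) ^ 2 := by positivity
  unfold dseq
  rw [← add_div, div_eq_one_iff_eq (ne_of_gt hn2)]
  have h2 : ((((Finset.Icc 1 n) ×ˢ (Finset.Icc 1 n)).filter (fun p => p ∈ K)).card : ℝ)
      + (((Finset.Icc 1 n) ×ˢ (Finset.Icc 1 n)).filter (fun p => p ∈ Kᶜ)).card = ((n:ℝ))^2 := by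
    exact_mod_cast congrArg (Nat.cast : ℕ → ℝ) hcard
  push_cast at h2 ⊢
  convert h2 using 5 <;> first | rfl | exact Subsingleton.elim _ _


lemma liminf_ge_of_compl (K : Set (ℕ × ℕ)) (a : ℝ) (h : upperDensity2 Kᶜ ≤ 1 - a) :
    a ≤ liminf (dseq K) atTop := by
  refine le_of_forall_pos_le_add fun η hη => ?_
  have h1 : limsup (dseq Kᶜ) atTop < 1 - a + η := lt_of_le_of_lt h (by linarith)
  have h2 : ∀ᶠ n in atTop, dseq Kᶜ n < 1 - a + η :=
    eventually_lt_of_limsup_lt h1 (bddU Kᶜ)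
  have h3 : ∀ᶠ n in atTop, a - η ≤ dseq K n := by
    filter_upwards [h2, eventually_ge_atTop 1] with n hn hn1
    have := dseq_add_compl K hn1
    linarith
  have h4 : a - η ≤ liminf (dseq K) atTop :=
    le_liminf_of_le (bddU K).isCoboundedUnder_flip h3
  linarith

lemma dseq_sum_le (F : Finset ℕ) (G : ℕ → Set (ℕ × ℕ)) (B : Set (ℕ × ℕ))
    (hdisj : ∀ k ∈ F, ∀ j ∈ F, k ≠ j → Disjoint (G k) (G j))
    (hsub : ∀ k ∈ F, G k ⊆ B) (n : ℕ) :
    ∑ k ∈ F, dseq (G k) n ≤ dseq B n := by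
  unfold dseq
  rw [← Finset.sum_div]
  have hc : (0:ℝ) ≤ (n:ℝ)^2 := by positivity
  gcongr
  have hnat : ∑ k ∈ F, (((Finset.Icc 1 n) ×ˢ (Finset.Icc 1 n)).filter (fun p => p ∈ G k)).card
      ≤ (((Finset.Icc 1 n) ×ˢ (Finset.Icc 1 n)).filter (fun p => p ∈ B)).card := by
    rw [← Finset.card_biUnion]
    · apply Finset.card_le_card
      intro p hp
      simp only [Finset.mem_biUnion, Finset.mem_filter] at hp ⊢
      obtain ⟨k, hk, hpA, hpG⟩ := hp
      exact ⟨hpA, hsub k hk hpG⟩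
    · intro k hk j hj hkj
      rw [Function.onFun, Finset.disjoint_left]
      intro p hp hp'
      simp only [Finset.mem_filter] at hp hp'
      exact Set.disjoint_left.1 (hdisj k hk j hj hkj) hp.2 hp'.2
  calc ∑ k ∈ F, ((((Finset.Icc 1 n) ×ˢ (Finset.Icc 1 n)).filter (fun p => p ∈ G k)).card : ℝ)
      = ((∑ k ∈ F, (((Finset.Icc 1 n) ×ˢ (Finset.Icc 1 n)).filter (fun p => p ∈ G k)).card : ℕ) : ℝ) := by
        push_cast; rfl
    _ ≤ _ := by exact_mod_cast hnat

lemma core (F : Finset ℕ) (G : ℕ → Set (ℕ × ℕ)) (B : Set (ℕ × ℕ)) (a : ℕ → ℝ)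
    (hdisj : ∀ k ∈ F, ∀ j ∈ F, k ≠ j → Disjoint (G k) (G j))
    (hsub : ∀ k ∈ F, G k ⊆ B)
    (hld : ∀ k ∈ F, a k ≤ liminf (dseq (G k)) atTop) :
    ∑ k ∈ F, a k ≤ upperDensity2 B := by
  refine le_of_forall_pos_le_add fun η hη => ?_
  set η' : ℝ := η / (F.card + 1) with hη'def
  have hη' : 0 < η' := by positivity
  have hev : ∀ᶠ n in atTop, ∀ k ∈ F, a k - η' < dseq (G k) n := by
    rw [eventually_all_finset]
    intro k hk
    refine eventually_lt_of_lt_liminf ?_ (bddL (G k))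
    have := hld k hk
    linarith
  have hev2 : ∀ᶠ n in atTop, (∑ k ∈ F, a k) - η ≤ dseq B n := by
    filter_upwards [hev] with n hn
    have h1 : ∑ k ∈ F, (a k - η') ≤ ∑ k ∈ F, dseq (G k) n :=
      Finset.sum_le_sum fun k hk => le_of_lt (hn k hk)
    have h2 : ∑ k ∈ F, dseq (G k) n ≤ dseq B n := dseq_sum_le F G B hdisj hsub n
    rw [Finset.sum_sub_distrib, Finset.sum_const, nsmul_eq_mul] at h1
    have h3 : (F.card : ℝ) * η' ≤ η := by
      rw [hη'def]
      have hFc : (F.card : ℝ) ≤ (F.card : ℝ) + 1 := by linarith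
      calc (F.card : ℝ) * (η / ((F.card : ℝ) + 1)) ≤ ((F.card : ℝ) + 1) * (η / ((F.card : ℝ) + 1)) := by
            apply mul_le_mul_of_nonneg_right hFc; positivity
        _ = η := by field_simp
    linarith
  have h4 : (∑ k ∈ F, a k) - η ≤ liminf (dseq B) atTop :=
    le_liminf_of_le (bddU B).isCoboundedUnder_flip hev2
  have h5 : liminf (dseq B) atTop ≤ limsup (dseq B) atTop := liminf_le_limsup (bddU B) (bddL B)
  rw [ud_eq]
  linarith

lemma ciSup_two_le_one (g : ℝ → ℝ) (hg : ∀ ε, 0 < ε → g ε ≤ 1) :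
    (⨆ ε, ⨆ (_ : ε > 0), g ε) ≤ 1 := by
  apply ciSup_le
  intro ε
  by_cases h : ε > 0
  · haveI : Nonempty (ε > 0) := ⟨h⟩
    rw [ciSup_const]; exact hg ε h
  · haveI : IsEmpty (ε > 0) := ⟨h⟩
    rw [Real.iSup_of_isEmpty]; norm_num

lemma le_ciSup_two (g : ℝ → ℝ) (hg : ∀ ε, 0 < ε → g ε ≤ 1) {ε : ℝ} (hε : 0 < ε) :
    g ε ≤ ⨆ ε, ⨆ (_ : ε > 0), g ε := by
  have h1 : g ε = ⨆ (_ : ε > 0), g ε := by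
    haveI : Nonempty (ε > 0) := ⟨hε⟩
    rw [ciSup_const]
  rw [h1]
  apply le_ciSup (f := fun ε => ⨆ (_ : ε > 0), g ε)
  refine ⟨1, Set.forall_mem_range.2 fun e => ?_⟩
  by_cases h : e > 0
  · haveI : Nonempty (e > 0) := ⟨h⟩
    rw [ciSup_const]; exact hg e h
  · haveI : IsEmpty (e > 0) := ⟨h⟩
    rw [Real.iSup_of_isEmpty]; norm_num

lemma exists_sep (R : Finset ℝ) : ∃ ε : ℝ, 0 < ε ∧ ∀ a ∈ R, ∀ b ∈ R, a ≠ b → 2 * ε ≤ |a - b| := by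
  classical
  set s := ((R ×ˢ R).filter (fun p => p.1 ≠ p.2)).image (fun p => |p.1 - p.2|) with hs
  have hmem_s : ∀ a ∈ R, ∀ b ∈ R, a ≠ b → |a - b| ∈ s := by
    intro a ha b hb hab
    rw [hs]
    exact Finset.mem_image.2 ⟨(a, b), Finset.mem_filter.2 ⟨Finset.mem_product.2 ⟨ha, hb⟩, hab⟩, rfl⟩
  rcases s.eq_empty_or_nonempty with he | hne
  · refine ⟨1, one_pos, fun a ha b hb hab => absurd (he ▸ hmem_s a ha b hb hab) (Finset.notMem_empty _)⟩
  · obtain ⟨m, hm, hmle⟩ := Finset.exists_min_image s (fun x => x) hne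
    have hmpos : 0 < m := by
      rw [hs] at hm
      obtain ⟨p, hp, hpe⟩ := Finset.mem_image.1 hm
      have hne' : p.1 ≠ p.2 := (Finset.mem_filter.1 hp).2
      have : 0 < |p.1 - p.2| := abs_pos.2 (sub_ne_zero.2 hne')
      linarith [hpe ▸ this]
    refine ⟨m / 2, by linarith, fun a ha b hb hab => ?_⟩
    have := hmle _ (hmem_s a ha b hb hab)
    linarith

lemma exists_bound (R : Finset ℝ) (ε : ℝ) : ∃ C : ℝ, 0 < C ∧ ∀ r ∈ R, |r| + ε ≤ C := by
  refine ⟨(∑ r ∈ R, |r|) + |ε| + 1, by positivity, fun r hr => ?_⟩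
  have h1 : |r| ≤ ∑ r' ∈ R, |r'| := Finset.single_le_sum (fun r' _ => abs_nonneg r') hr
  have h2 : ε ≤ |ε| := le_abs_self ε
  linarith


noncomputable def nbhdE (ε C : ℝ) (ℓ : EReal) : Set ℝ :=
  if ℓ = ⊤ then Set.Iic (-C) else if ℓ = ⊥ then Set.Ici C
  else Set.Ioo (ℓ.toReal - ε) (ℓ.toReal + ε)

lemma nbhdE_disjoint (ε C : ℝ) (hε : 0 < ε) (hC : 0 < C) (R : Finset ℝ)
    (hsep : ∀ a ∈ R, ∀ b ∈ R, a ≠ b → 2 * ε ≤ |a - b|)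
    (hbd : ∀ r ∈ R, |r| + ε ≤ C)
    {ℓ ℓ' : EReal} (hℓ : ℓ.toReal ∈ R) (hℓ' : ℓ'.toReal ∈ R) (hne : ℓ ≠ ℓ') :
    Disjoint (nbhdE ε C ℓ) (nbhdE ε C ℓ') := by
  rw [Set.disjoint_left]
  intro t ht ht'
  by_cases h1 : ℓ = ⊤
  · subst h1
    simp [nbhdE] at ht
    by_cases h3 : ℓ' = ⊤
    · exact hne h3.symm
    by_cases h4 : ℓ' = ⊥
    · subst h4
      simp [nbhdE] at ht'
      linarith
    · simp only [nbhdE, if_neg h3, if_neg h4, Set.mem_Ioo] at ht'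
      have hb := hbd _ hℓ'
      linarith [neg_abs_le ℓ'.toReal, ht'.1]
  by_cases h2 : ℓ = ⊥
  · subst h2
    simp [nbhdE] at ht
    by_cases h3 : ℓ' = ⊤
    · subst h3
      simp [nbhdE] at ht'
      linarith
    by_cases h4 : ℓ' = ⊥
    · exact hne h4.symm
    · simp only [nbhdE, if_neg h3, if_neg h4, Set.mem_Ioo] at ht'
      have hb := hbd _ hℓ'
      linarith [le_abs_self ℓ'.toReal, ht'.2]
  · simp only [nbhdE, if_neg h1, if_neg h2, Set.mem_Ioo] at ht
    by_cases h3 : ℓ' = ⊤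
    · subst h3
      simp [nbhdE] at ht'
      have hb := hbd _ hℓ
      linarith [neg_abs_le ℓ.toReal, ht.1]
    by_cases h4 : ℓ' = ⊥
    · subst h4
      simp [nbhdE] at ht'
      have hb := hbd _ hℓ
      linarith [le_abs_self ℓ.toReal, ht.2]
    · simp only [nbhdE, if_neg h3, if_neg h4, Set.mem_Ioo] at ht'
      have hrr : ℓ.toReal ≠ ℓ'.toReal := by
        intro h
        exact hne (by rw [← EReal.coe_toReal h1 h2, ← EReal.coe_toReal h3 h4, h])
      have hs := hsep _ hℓ _ hℓ' hrr
      rcases abs_cases (ℓ.toReal - ℓ'.toReal) with ⟨he, _⟩ | ⟨he, _⟩ <;>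
        rw [he] at hs <;> linarith [ht.1, ht.2, ht'.1, ht'.2]

end IOLZ

set_option maxHeartbeats 1000000 in
theorem index_other_limits_zero (x : ℕ → ℕ → ℝ) (L : ℕ → EReal)
    (hL : Function.Injective L) (α : ℕ → ℝ) (hα : ∀ k, idx2E x (L k) = α k)
    (hsum : ∑' k : ℕ, α k = 1) (M : EReal) (hM : ∀ k, M ≠ L k) :
    idx2E x M = 0 := by
  classical
  have hUD : ∀ K : Set (ℕ × ℕ), upperDensity2 K ≤ 1 := IOLZ.ud_le_one
  have hα0 : ∀ k, 0 ≤ α k := by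
    intro k
    rw [← hα k]
    unfold idx2E
    split_ifs with h1 h2
    · have h : (⨆ M' : ℝ, upperDensity2 {p : ℕ × ℕ | ¬ x p.1 p.2 ≤ M'}) ≤ 1 :=
        ciSup_le fun _ => hUD _
      linarith
    · have h : (⨆ M' : ℝ, upperDensity2 {p : ℕ × ℕ | ¬ M' ≤ x p.1 p.2}) ≤ 1 :=
        ciSup_le fun _ => hUD _
      linarith
    · unfold idx2
      have h : (⨆ ε > (0:ℝ), upperDensity2
          {p : ℕ × ℕ | x p.1 p.2 ∉ Set.Ioo ((L k).toReal - ε) ((L k).toReal + ε)}) ≤ 1 :=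
        IOLZ.ciSup_two_le_one (fun ε => upperDensity2
            {p : ℕ × ℕ | x p.1 p.2 ∉ Set.Ioo ((L k).toReal - ε) ((L k).toReal + ε)})
          (fun _ _ => hUD _)
      linarith
  have hsummable : Summable α := by
    by_contra h
    rw [tsum_eq_zero_of_not_summable h] at hsum
    norm_num at hsum
  have key : ∀ δ : ℝ, 0 < δ → ∃ ε C : ℝ, 0 < ε ∧ 0 < C ∧
      1 - δ ≤ upperDensity2 {p : ℕ × ℕ | x p.1 p.2 ∉ IOLZ.nbhdE ε C M} := by
    intro δ hδ
    obtain ⟨F, hF⟩ : ∃ F : Finset ℕ, 1 - δ < ∑ k ∈ F, α k := by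
      have h := hsummable.hasSum
      rw [hsum] at h
      exact (h.eventually (eventually_gt_nhds (by linarith))).exists
    set R : Finset ℝ := insert M.toReal (F.image fun k => (L k).toReal) with hR
    obtain ⟨ε, hε, hsep⟩ := IOLZ.exists_sep R
    obtain ⟨C, hC, hbd⟩ := IOLZ.exists_bound R ε
    refine ⟨ε, C, hε, hC, ?_⟩
    have hMR : M.toReal ∈ R := Finset.mem_insert_self _ _
    have hLR : ∀ k ∈ F, (L k).toReal ∈ R := fun k hk =>
      Finset.mem_insert_of_mem (Finset.mem_image_of_mem _ hk)
    set G : ℕ → Set (ℕ × ℕ) := fun k => {p : ℕ × ℕ | x p.1 p.2 ∈ IOLZ.nbhdE ε C (L k)} with hG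
    have hdisj : ∀ k ∈ F, ∀ j ∈ F, k ≠ j → Disjoint (G k) (G j) := by
      intro k hk j hj hkj
      have hd := IOLZ.nbhdE_disjoint ε C hε hC R hsep hbd (hLR k hk) (hLR j hj)
        (fun h => hkj (hL h))
      rw [Set.disjoint_left] at hd ⊢
      intro p hp hp'
      exact hd hp hp'
    have hsub : ∀ k ∈ F, G k ⊆ {p : ℕ × ℕ | x p.1 p.2 ∉ IOLZ.nbhdE ε C M} := by
      intro k hk p hp
      have hd := IOLZ.nbhdE_disjoint ε C hε hC R hsep hbd (hLR k hk) hMR (Ne.symm (hM k))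
      exact fun hmem => Set.disjoint_left.1 hd hp hmem
    have hld : ∀ k ∈ F, α k ≤ liminf (IOLZ.dseq (G k)) atTop := by
      intro k hk
      apply IOLZ.liminf_ge_of_compl
      have hk' := hα k
      by_cases h1 : L k = ⊤
      · rw [idx2E, if_pos h1] at hk'
        have hle : upperDensity2 {p : ℕ × ℕ | ¬ x p.1 p.2 ≤ -C}
            ≤ ⨆ M' : ℝ, upperDensity2 {p : ℕ × ℕ | ¬ x p.1 p.2 ≤ M'} :=
          le_ciSup (f := fun M' : ℝ => upperDensity2 {p : ℕ × ℕ | ¬ x p.1 p.2 ≤ M'})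
            ⟨1, Set.forall_mem_range.2 fun _ => hUD _⟩ (-C)
        have hset : (G k)ᶜ = {p : ℕ × ℕ | ¬ x p.1 p.2 ≤ -C} := by
          ext p
          simp [hG, IOLZ.nbhdE, h1]
        rw [hset]
        linarith
      by_cases h2 : L k = ⊥
      · rw [idx2E, if_neg h1, if_pos h2] at hk'
        have hle : upperDensity2 {p : ℕ × ℕ | ¬ C ≤ x p.1 p.2}
            ≤ ⨆ M' : ℝ, upperDensity2 {p : ℕ × ℕ | ¬ M' ≤ x p.1 p.2} :=
          le_ciSup (f := fun M' : ℝ => upperDensity2 {p : ℕ × ℕ | ¬ M' ≤ x p.1 p.2})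
            ⟨1, Set.forall_mem_range.2 fun _ => hUD _⟩ C
        have hset : (G k)ᶜ = {p : ℕ × ℕ | ¬ C ≤ x p.1 p.2} := by
          ext p
          simp [hG, IOLZ.nbhdE, h1, h2]
        rw [hset]
        linarith
      · rw [idx2E, if_neg h1, if_neg h2, idx2] at hk'
        have hle : upperDensity2
            {p : ℕ × ℕ | x p.1 p.2 ∉ Set.Ioo ((L k).toReal - ε) ((L k).toReal + ε)}
            ≤ ⨆ ε' > (0:ℝ), upperDensity2
              {p : ℕ × ℕ | x p.1 p.2 ∉ Set.Ioo ((L k).toReal - ε') ((L k).toReal + ε')} :=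
          IOLZ.le_ciSup_two (fun ε' => upperDensity2
              {p : ℕ × ℕ | x p.1 p.2 ∉ Set.Ioo ((L k).toReal - ε') ((L k).toReal + ε')})
            (fun _ _ => hUD _) hε
        have hset : (G k)ᶜ =
            {p : ℕ × ℕ | x p.1 p.2 ∉ Set.Ioo ((L k).toReal - ε) ((L k).toReal + ε)} := by
          ext p
          simp [hG, IOLZ.nbhdE, h1, h2]
        rw [hset]
        linarith
    have hcore := IOLZ.core F G _ α hdisj hsub hld
    linarith
  by_cases h1 : M = ⊤
  · rw [idx2E, if_pos h1]
    have hle1 : (⨆ M' : ℝ, upperDensity2 {p : ℕ × ℕ | ¬ x p.1 p.2 ≤ M'}) ≤ 1 :=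
      ciSup_le fun _ => hUD _
    have hge : (1:ℝ) ≤ ⨆ M' : ℝ, upperDensity2 {p : ℕ × ℕ | ¬ x p.1 p.2 ≤ M'} := by
      refine le_of_forall_pos_le_add fun δ hδ => ?_
      obtain ⟨ε, C, hε, hC, hkey⟩ := key δ hδ
      have hset : {p : ℕ × ℕ | x p.1 p.2 ∉ IOLZ.nbhdE ε C M}
          = {p : ℕ × ℕ | ¬ x p.1 p.2 ≤ -C} := by
        ext p
        simp [IOLZ.nbhdE, h1]
      rw [hset] at hkey
      have hle : upperDensity2 {p : ℕ × ℕ | ¬ x p.1 p.2 ≤ -C}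
          ≤ ⨆ M' : ℝ, upperDensity2 {p : ℕ × ℕ | ¬ x p.1 p.2 ≤ M'} :=
        le_ciSup (f := fun M' : ℝ => upperDensity2 {p : ℕ × ℕ | ¬ x p.1 p.2 ≤ M'})
          ⟨1, Set.forall_mem_range.2 fun _ => hUD _⟩ (-C)
      linarith
    linarith
  by_cases h2 : M = ⊥
  · rw [idx2E, if_neg h1, if_pos h2]
    have hle1 : (⨆ M' : ℝ, upperDensity2 {p : ℕ × ℕ | ¬ M' ≤ x p.1 p.2}) ≤ 1 :=
      ciSup_le fun _ => hUD _
    have hge : (1:ℝ) ≤ ⨆ M' : ℝ, upperDensity2 {p : ℕ × ℕ | ¬ M' ≤ x p.1 p.2} := by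
      refine le_of_forall_pos_le_add fun δ hδ => ?_
      obtain ⟨ε, C, hε, hC, hkey⟩ := key δ hδ
      have hset : {p : ℕ × ℕ | x p.1 p.2 ∉ IOLZ.nbhdE ε C M}
          = {p : ℕ × ℕ | ¬ C ≤ x p.1 p.2} := by
        ext p
        simp [IOLZ.nbhdE, h1, h2]
      rw [hset] at hkey
      have hle : upperDensity2 {p : ℕ × ℕ | ¬ C ≤ x p.1 p.2}
          ≤ ⨆ M' : ℝ, upperDensity2 {p : ℕ × ℕ | ¬ M' ≤ x p.1 p.2} :=
        le_ciSup (f := fun M' : ℝ => upperDensity2 {p : ℕ × ℕ | ¬ M' ≤ x p.1 p.2})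
          ⟨1, Set.forall_mem_range.2 fun _ => hUD _⟩ C
      linarith
    linarith
  · rw [idx2E, if_neg h1, if_neg h2, idx2]
    have hle1 : (⨆ ε > (0:ℝ), upperDensity2
        {p : ℕ × ℕ | x p.1 p.2 ∉ Set.Ioo (M.toReal - ε) (M.toReal + ε)}) ≤ 1 :=
      IOLZ.ciSup_two_le_one (fun ε => upperDensity2
          {p : ℕ × ℕ | x p.1 p.2 ∉ Set.Ioo (M.toReal - ε) (M.toReal + ε)})
        (fun _ _ => hUD _)
    have hge : (1:ℝ) ≤ ⨆ ε > (0:ℝ), upperDensity2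
        {p : ℕ × ℕ | x p.1 p.2 ∉ Set.Ioo (M.toReal - ε) (M.toReal + ε)} := by
      refine le_of_forall_pos_le_add fun δ hδ => ?_
      obtain ⟨ε, C, hε, hC, hkey⟩ := key δ hδ
      have hset : {p : ℕ × ℕ | x p.1 p.2 ∉ IOLZ.nbhdE ε C M}
          = {p : ℕ × ℕ | x p.1 p.2 ∉ Set.Ioo (M.toReal - ε) (M.toReal + ε)} := by
        ext p
        simp [IOLZ.nbhdE, h1, h2]
      rw [hset] at hkey
      have hle : upperDensity2
          {p : ℕ × ℕ | x p.1 p.2 ∉ Set.Ioo (M.toReal - ε) (M.toReal + ε)}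
          ≤ ⨆ ε' > (0:ℝ), upperDensity2
            {p : ℕ × ℕ | x p.1 p.2 ∉ Set.Ioo (M.toReal - ε') (M.toReal + ε')} :=
        IOLZ.le_ciSup_two (fun ε' => upperDensity2
            {p : ℕ × ℕ | x p.1 p.2 ∉ Set.Ioo (M.toReal - ε') (M.toReal + ε')})
          (fun _ _ => hUD _) hε
      linarith
    linarith
end

section
/- Let (x_n) be a sequence of reals and f : [0,1] → [0,1] an injective differentiable function with differentiable inverse such that i(x_n; A) = |f⁻¹(A)| for every Peano–Jordan measurable set A ⊆ [0,1]. Then for every interval I ⊆ [0,1], the set {n ∈ ℕ : x_n ∈ I} has a natural density equal to |f⁻¹(I)|. -/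
open Filter Set MeasureTheory
open scoped Classical Pointwise

/-! ### Auxiliary lemmas -/

noncomputable def dd (S : Set ℕ) (n : ℕ) : ℝ :=
  (((Finset.Icc 1 n).filter (fun k => k ∈ S)).card : ℝ) / (n : ℝ)

lemma dd_nonneg (S : Set ℕ) (n : ℕ) : 0 ≤ dd S n := by
  unfold dd; positivity

lemma dd_le_one (S : Set ℕ) (n : ℕ) : dd S n ≤ 1 := by
  unfold dd
  rcases Nat.eq_zero_or_pos n with rfl | hn
  · simp
  · rw [div_le_one (by exact_mod_cast hn)]
    exact_mod_cast (Finset.card_filter_le _ _).trans (by simp [Nat.card_Icc])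

lemma dd_bddAbove (S : Set ℕ) : IsBoundedUnder (· ≤ ·) atTop (dd S) :=
  isBoundedUnder_of ⟨1, fun n => dd_le_one S n⟩

lemma dd_bddBelow (S : Set ℕ) : IsBoundedUnder (· ≥ ·) atTop (dd S) :=
  isBoundedUnder_of ⟨0, fun n => dd_nonneg S n⟩

lemma dd_compl (S : Set ℕ) {n : ℕ} (hn : 1 ≤ n) : dd Sᶜ n = 1 - dd S n := by
  unfold dd
  have hcard : ((Finset.Icc 1 n).filter (fun k => k ∈ S)).card
      + ((Finset.Icc 1 n).filter (fun k => k ∉ S)).card = n := by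
    rw [Finset.card_filter_add_card_filter_not]
    simp [Nat.card_Icc]
  have hn' : (0:ℝ) < n := by exact_mod_cast hn
  simp only [Set.mem_compl_iff]
  rw [eq_sub_iff_add_eq, ← add_div, div_eq_one_iff_eq hn'.ne']
  exact_mod_cast (Nat.add_comm _ _).trans hcard

lemma dd_mono {S T : Set ℕ} (h : S ⊆ T) (n : ℕ) : dd S n ≤ dd T n := by
  unfold dd
  rcases Nat.eq_zero_or_pos n with rfl | hn
  · simp
  · apply div_le_div_of_nonneg_right ?_ (by positivity)
    exact_mod_cast Finset.card_le_card (Finset.monotone_filter_right _ (fun k _ hk => h hk))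

lemma upperDensity1_eq (S : Set ℕ) : upperDensity1 S = limsup (dd S) atTop := rfl
lemma lowerDensity1_eq (S : Set ℕ) : lowerDensity1 S = liminf (dd S) atTop := rfl

lemma lowerDensity1_eq_one_sub (S : Set ℕ) :
    lowerDensity1 S = 1 - upperDensity1 Sᶜ := by
  rw [lowerDensity1_eq, upperDensity1_eq]
  have : liminf (dd S) atTop = liminf (fun n => 1 - dd Sᶜ n) atTop := by
    apply liminf_congr
    filter_upwards [eventually_ge_atTop 1] with n hn
    have := dd_compl S hn; linarith
  rw [this]
  exact liminf_const_sub atTop (dd Sᶜ) 1 (dd_bddAbove _) ((dd_bddBelow _).isCoboundedUnder_le)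

lemma upperDensity1_eq_one_sub (S : Set ℕ) :
    upperDensity1 Sᶜ = 1 - lowerDensity1 S := by
  rw [lowerDensity1_eq_one_sub]; ring

lemma upperDensity1_mono {S T : Set ℕ} (h : S ⊆ T) : upperDensity1 S ≤ upperDensity1 T := by
  rw [upperDensity1_eq, upperDensity1_eq]
  exact limsup_le_limsup (Eventually.of_forall (dd_mono h))
    ((dd_bddBelow _).isCoboundedUnder_le) (dd_bddAbove _)

lemma lowerDensity1_mono {S T : Set ℕ} (h : S ⊆ T) : lowerDensity1 S ≤ lowerDensity1 T := by
  rw [lowerDensity1_eq, lowerDensity1_eq]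
  exact liminf_le_liminf (Eventually.of_forall (dd_mono h))
    (dd_bddBelow _) ((dd_bddAbove _).isCoboundedUnder_ge)

lemma upperDensity1_le_one (S : Set ℕ) : upperDensity1 S ≤ 1 := by
  rw [upperDensity1_eq]
  exact limsup_le_of_le ((dd_bddBelow _).isCoboundedUnder_le)
    (Eventually.of_forall (dd_le_one S))

lemma frontier_Icc_subset_pair (u v : ℝ) : frontier (Icc u v) ⊆ ({u, v} : Set ℝ) := by
  rw [frontier, isClosed_Icc.closure_eq, interior_Icc]
  rintro y ⟨⟨h1, h2⟩, h3⟩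
  simp only [mem_insert_iff, mem_singleton_iff]
  rcases eq_or_lt_of_le h1 with h | h
  · exact Or.inl h.symm
  rcases eq_or_lt_of_le h2 with h' | h'
  · exact Or.inr h'
  · exact absurd (Set.mem_Ioo.mpr ⟨h, h'⟩) h3

lemma jordan_Icc (u v : ℝ) : JordanMeasurable1 (Icc u v) :=
  ⟨Metric.isBounded_Icc u v, measure_mono_null (frontier_Icc_subset_pair u v)
    ((((Set.finite_singleton v).insert u).countable).measure_zero volume)⟩

lemma jordan_union {A B : Set ℝ} (hA : JordanMeasurable1 A) (hB : JordanMeasurable1 B) :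
    JordanMeasurable1 (A ∪ B) :=
  ⟨hA.1.union hB.1, measure_mono_null ((frontier_union_subset A B).trans
      (union_subset_union inter_subset_left inter_subset_right))
    (measure_union_null hA.2 hB.2)⟩

theorem density_on_intervals (x : ℕ → ℝ) (f finv : ℝ → ℝ)
    (hmaps : Set.MapsTo f (Set.Icc 0 1) (Set.Icc 0 1))
    (hinj : Set.InjOn f (Set.Icc 0 1))
    (hleft : ∀ t ∈ Set.Icc (0 : ℝ) 1, finv (f t) = t)
    (hright : ∀ t ∈ Set.Icc (0 : ℝ) 1, f (finv t) = t)
    (hdf : DifferentiableOn ℝ f (Set.Icc 0 1))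
    (hdfinv : DifferentiableOn ℝ finv (Set.Icc 0 1))
    (hidx : ∀ A ⊆ Set.Icc (0 : ℝ) 1, JordanMeasurable1 A →
      idxSet1 x A = jordanMeasure1 (Set.Icc 0 1 ∩ f ⁻¹' A)) :
    ∀ I ⊆ Set.Icc (0 : ℝ) 1, I.OrdConnected →
      HasDensity1 {n | x n ∈ I} (jordanMeasure1 (Set.Icc 0 1 ∩ f ⁻¹' I)) := by
  intro I hI hIconn
  have hvolJ : volume (Icc (0:ℝ) 1) = 1 := by simp [Real.volume_Icc]
  -- key consequence of hidx
  have key : ∀ A : Set ℝ, A ⊆ Icc (0:ℝ) 1 → JordanMeasurable1 A → ∀ ε : ℝ, 0 < ε →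
      (volume (Icc (0:ℝ) 1 ∩ f ⁻¹' A)).toReal
        ≤ lowerDensity1 {n | x n ∈ A + Set.Ioo (-ε) ε} := by
    intro A hA hAj ε hε
    have h := hidx A hA hAj
    unfold idxSet1 jordanMeasure1 at h
    have hsup : (⨆ e > (0:ℝ), upperDensity1 {n | x n ∉ A + Set.Ioo (-e) e})
        = 1 - (volume (Icc (0:ℝ) 1 ∩ f ⁻¹' A)).toReal := by linarith
    have hb : ∀ e : ℝ, (⨆ _ : e > (0:ℝ), upperDensity1 {n | x n ∉ A + Set.Ioo (-e) e}) ≤ 1 := by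
      intro e
      by_cases he : e > 0
      · rw [ciSup_pos he]; exact upperDensity1_le_one _
      · haveI : IsEmpty (e > (0:ℝ)) := ⟨he⟩
        rw [Real.iSup_of_isEmpty]
        norm_num
    have hle : upperDensity1 {n | x n ∉ A + Set.Ioo (-ε) ε}
        ≤ ⨆ e > (0:ℝ), upperDensity1 {n | x n ∉ A + Set.Ioo (-e) e} := by
      have hstep : (⨆ _ : ε > (0:ℝ), upperDensity1 {n | x n ∉ A + Set.Ioo (-ε) ε})
          ≤ ⨆ e > (0:ℝ), upperDensity1 {n | x n ∉ A + Set.Ioo (-e) e} := by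
        apply le_ciSup (f := fun e => ⨆ _ : e > (0:ℝ),
          upperDensity1 {n | x n ∉ A + Set.Ioo (-e) e}) ?_ ε
        exact ⟨1, by rintro y ⟨e, rfl⟩; exact hb e⟩
      rwa [ciSup_pos hε] at hstep
    rw [hsup] at hle
    have hcompl : {n | x n ∉ A + Set.Ioo (-ε) ε} = {n | x n ∈ A + Set.Ioo (-ε) ε}ᶜ := rfl
    rw [lowerDensity1_eq_one_sub, ← hcompl]
    linarith
  by_cases hne : I.Nonempty
  swap
  · rw [not_nonempty_iff_eq_empty] at hne
    subst hne
    unfold HasDensity1 jordanMeasure1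
    simp only [preimage_empty, inter_empty, measure_empty, ENNReal.toReal_zero,
      Set.mem_empty_iff_false, Set.setOf_false, Finset.filter_false,
      Finset.card_empty, Nat.cast_zero, zero_div]
    exact tendsto_const_nhds
  obtain ⟨y0, hy0⟩ := hne
  have hbddA : BddAbove I := ⟨1, fun z hz => (hI hz).2⟩
  have hbddB : BddBelow I := ⟨0, fun z hz => (hI hz).1⟩
  set a := sInf I with ha
  set b := sSup I with hb
  have ha0 : 0 ≤ a := le_csInf ⟨y0, hy0⟩ (fun z hz => (hI hz).1)
  have hb1 : b ≤ 1 := csSup_le ⟨y0, hy0⟩ (fun z hz => (hI hz).2)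
  have hab : a ≤ b := csInf_le_csSup ⟨y0, hy0⟩ hbddB hbddA
  have hIcc : I ⊆ Icc a b := fun z hz => ⟨csInf_le hbddB hz, le_csSup hbddA hz⟩
  have hIoo : Ioo a b ⊆ I := by
    rintro z ⟨h1, h2⟩
    obtain ⟨p, hp, hpz⟩ := exists_lt_of_csInf_lt ⟨y0, hy0⟩ h1
    obtain ⟨q, hq, hzq⟩ := exists_lt_of_lt_csSup ⟨y0, hy0⟩ h2
    exact hIconn.out hp hq ⟨hpz.le, hzq.le⟩
  -- measure facts
  have hnull : ∀ p : ℝ, volume (Icc (0:ℝ) 1 ∩ f ⁻¹' {p}) = 0 := by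
    intro p
    apply Set.Subsingleton.measure_zero _ volume
    rintro s ⟨hs, hs2⟩ t ⟨ht, ht2⟩
    apply hinj hs ht
    simp only [mem_preimage, mem_singleton_iff] at hs2 ht2
    rw [hs2, ht2]
  have hmono : ∀ {A B : Set ℝ}, A ⊆ B →
      volume (Icc (0:ℝ) 1 ∩ f ⁻¹' A) ≤ volume (Icc (0:ℝ) 1 ∩ f ⁻¹' B) :=
    fun h => measure_mono (inter_subset_inter_right _ (preimage_mono h))
  have hfin : ∀ A : Set ℝ, volume (Icc (0:ℝ) 1 ∩ f ⁻¹' A) ≠ ⊤ := by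
    intro A
    exact ((measure_mono inter_subset_left).trans_lt
      (by rw [hvolJ]; exact ENNReal.one_lt_top)).ne
  have hm_Ioo : volume (Icc (0:ℝ) 1 ∩ f ⁻¹' Ioo a b)
      = volume (Icc (0:ℝ) 1 ∩ f ⁻¹' Icc a b) := by
    refine le_antisymm (hmono Ioo_subset_Icc_self) ?_
    have hsub : Icc (0:ℝ) 1 ∩ f ⁻¹' Icc a b ⊆
        (Icc (0:ℝ) 1 ∩ f ⁻¹' Ioo a b) ∪
          ((Icc (0:ℝ) 1 ∩ f ⁻¹' {a}) ∪ (Icc (0:ℝ) 1 ∩ f ⁻¹' {b})) := by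
      rintro t ⟨ht, hft⟩
      rcases eq_or_lt_of_le hft.1 with h | h
      · exact Or.inr (Or.inl ⟨ht, by simp [← h]⟩)
      rcases eq_or_lt_of_le hft.2 with h' | h'
      · exact Or.inr (Or.inr ⟨ht, by simp [h']⟩)
      · exact Or.inl ⟨ht, h, h'⟩
    calc volume (Icc (0:ℝ) 1 ∩ f ⁻¹' Icc a b) ≤ _ := measure_mono hsub
      _ ≤ volume (Icc (0:ℝ) 1 ∩ f ⁻¹' Ioo a b)
          + (volume (Icc (0:ℝ) 1 ∩ f ⁻¹' {a}) + volume (Icc (0:ℝ) 1 ∩ f ⁻¹' {b})) :=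
        (measure_union_le _ _).trans (by gcongr; exact measure_union_le _ _)
      _ = volume (Icc (0:ℝ) 1 ∩ f ⁻¹' Ioo a b) := by rw [hnull a, hnull b]; simp
  have hm_I : volume (Icc (0:ℝ) 1 ∩ f ⁻¹' I) = volume (Icc (0:ℝ) 1 ∩ f ⁻¹' Icc a b) :=
    le_antisymm (hmono hIcc) (hm_Ioo ▸ hmono hIoo)
  have hE1closed : IsClosed (Icc (0:ℝ) 1 ∩ f ⁻¹' Icc a b) :=
    (hdf.continuousOn).preimage_isClosed_of_isClosed isClosed_Icc isClosed_Icc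
  have hcomplset : Icc (0:ℝ) 1 ∩ f ⁻¹' (Ico 0 a ∪ Ioc b 1)
      = Icc (0:ℝ) 1 \ (Icc (0:ℝ) 1 ∩ f ⁻¹' Icc a b) := by
    ext t
    simp only [mem_inter_iff, mem_preimage, mem_union, mem_Ico, mem_Ioc, mem_diff, mem_Icc]
    constructor
    · rintro ⟨ht, hft⟩
      refine ⟨ht, ?_⟩
      rintro ⟨-, hfa, hfb⟩
      rcases hft with h | h
      · exact absurd hfa (not_le.mpr h.2)
      · exact absurd hfb (not_le.mpr h.1)
    · rintro ⟨ht, hnot⟩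
      refine ⟨ht, ?_⟩
      have hf01 := hmaps ht
      by_cases hlt : f t < a
      · exact Or.inl ⟨hf01.1, hlt⟩
      · refine Or.inr ⟨?_, hf01.2⟩
        by_contra hble
        exact hnot ⟨ht, not_lt.mp hlt, not_lt.mp hble⟩
  have hm_add : volume (Icc (0:ℝ) 1 ∩ f ⁻¹' (Ico 0 a ∪ Ioc b 1))
      = 1 - volume (Icc (0:ℝ) 1 ∩ f ⁻¹' Icc a b) := by
    rw [hcomplset, measure_diff inter_subset_left
      hE1closed.measurableSet.nullMeasurableSet (hfin _), hvolJ]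
  -- the shrinking parameter
  set δ : ℕ → ℝ := fun k => 1 / ((k : ℝ) + 1) with hδdef
  have hδ : ∀ k : ℕ, 0 < δ k := fun k => by positivity
  have hδmono : ∀ {k m : ℕ}, k ≤ m → δ m ≤ δ k := by
    intro k m h
    apply one_div_le_one_div_of_le (by positivity)
    have : (k:ℝ) ≤ m := by exact_mod_cast h
    linarith
  -- lower bound
  have hlow : ∀ k : ℕ, (volume (Icc (0:ℝ) 1 ∩ f ⁻¹' Icc (a + δ k) (b - δ k))).toReal
      ≤ lowerDensity1 {n | x n ∈ I} := by
    intro k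
    have hsubJ : Icc (a + δ k) (b - δ k) ⊆ Icc (0:ℝ) 1 := by
      intro z hz
      rcases hz with ⟨h1, h2⟩
      constructor
      · linarith [hδ k]
      · linarith [hδ k]
    refine le_trans (key _ hsubJ (jordan_Icc _ _) (δ k / 2) (by positivity)) ?_
    apply lowerDensity1_mono
    intro n hn
    have hn' : x n ∈ Icc (a + δ k) (b - δ k) + Set.Ioo (-(δ k / 2)) (δ k / 2) := hn
    rw [Set.mem_add] at hn'
    obtain ⟨s, hs, t, ht, hst⟩ := hn'
    rw [Set.mem_Icc] at hs
    rw [Set.mem_Ioo] at ht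
    show x n ∈ I
    rw [← hst]
    apply hIoo
    constructor
    · nlinarith [hδ k]
    · nlinarith [hδ k]
  have hmonoA : Monotone (fun k : ℕ => Icc (0:ℝ) 1 ∩ f ⁻¹' Icc (a + δ k) (b - δ k)) := by
    intro k m hkm
    apply inter_subset_inter_right
    apply preimage_mono
    exact Icc_subset_Icc (by linarith [hδmono hkm]) (by linarith [hδmono hkm])
  have hUnionA : (⋃ k : ℕ, Icc (0:ℝ) 1 ∩ f ⁻¹' Icc (a + δ k) (b - δ k))
      = Icc (0:ℝ) 1 ∩ f ⁻¹' Ioo a b := by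
    rw [← inter_iUnion, ← preimage_iUnion]
    have : (⋃ k : ℕ, Icc (a + δ k) (b - δ k)) = Ioo a b := by
      ext z
      simp only [mem_iUnion, mem_Icc, mem_Ioo]
      constructor
      · rintro ⟨k, h1, h2⟩
        constructor
        · linarith [hδ k]
        · linarith [hδ k]
      · rintro ⟨h1, h2⟩
        obtain ⟨k, hk⟩ := exists_nat_one_div_lt (lt_min (sub_pos.mpr h1) (sub_pos.mpr h2))
        have hk1 : δ k < z - a := lt_of_lt_of_le hk (min_le_left _ _)
        have hk2 : δ k < b - z := lt_of_lt_of_le hk (min_le_right _ _)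
        exact ⟨k, by linarith, by linarith⟩
    rw [this]
  have htendA : Tendsto
      (fun k : ℕ => (volume (Icc (0:ℝ) 1 ∩ f ⁻¹' Icc (a + δ k) (b - δ k))).toReal)
      atTop (nhds (volume (Icc (0:ℝ) 1 ∩ f ⁻¹' I)).toReal) := by
    have h := tendsto_measure_iUnion_atTop (μ := volume) hmonoA
    rw [hUnionA, hm_Ioo, ← hm_I] at h
    exact (ENNReal.tendsto_toReal (hfin I)).comp h
  have hlower : (volume (Icc (0:ℝ) 1 ∩ f ⁻¹' I)).toReal ≤ lowerDensity1 {n | x n ∈ I} :=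
    le_of_tendsto htendA (Eventually.of_forall hlow)
  -- upper bound
  have hupp : ∀ k : ℕ, upperDensity1 {n | x n ∈ I}
      ≤ 1 - (volume (Icc (0:ℝ) 1 ∩ f ⁻¹' (Icc 0 (a - δ k) ∪ Icc (b + δ k) 1))).toReal := by
    intro k
    have hsubJ : Icc (0:ℝ) (a - δ k) ∪ Icc (b + δ k) 1 ⊆ Icc (0:ℝ) 1 := by
      rintro z (⟨h1, h2⟩ | ⟨h1, h2⟩)
      · exact ⟨h1, by linarith [hδ k]⟩
      · exact ⟨by linarith [hδ k], h2⟩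
    have hkey := key _ hsubJ (jordan_union (jordan_Icc _ _) (jordan_Icc _ _))
      (δ k / 2) (by positivity)
    have hdisj : {n | x n ∈ I} ⊆
        {n | x n ∈ (Icc 0 (a - δ k) ∪ Icc (b + δ k) 1) + Set.Ioo (-(δ k / 2)) (δ k / 2)}ᶜ := by
      intro n hn hmem
      have hmem' : x n ∈ (Icc 0 (a - δ k) ∪ Icc (b + δ k) 1)
          + Set.Ioo (-(δ k / 2)) (δ k / 2) := hmem
      rw [Set.mem_add] at hmem'
      obtain ⟨s, hs, t, ht, hst⟩ := hmem'
      rw [Set.mem_Ioo] at ht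
      have hxI : x n ∈ Icc a b := hIcc hn
      rcases hs with ⟨hs1, hs2⟩ | ⟨hs1, hs2⟩
      · have : x n < a := by rw [← hst]; linarith [hδ k]
        exact absurd hxI.1 (not_le.mpr this)
      · have : b < x n := by rw [← hst]; linarith [hδ k]
        exact absurd hxI.2 (not_le.mpr this)
    calc upperDensity1 {n | x n ∈ I}
        ≤ upperDensity1 ({n | x n ∈ (Icc 0 (a - δ k) ∪ Icc (b + δ k) 1)
            + Set.Ioo (-(δ k / 2)) (δ k / 2)}ᶜ) := upperDensity1_mono hdisj
      _ = 1 - lowerDensity1 {n | x n ∈ (Icc 0 (a - δ k) ∪ Icc (b + δ k) 1)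
            + Set.Ioo (-(δ k / 2)) (δ k / 2)} := upperDensity1_eq_one_sub _
      _ ≤ 1 - (volume (Icc (0:ℝ) 1 ∩ f ⁻¹'
            (Icc 0 (a - δ k) ∪ Icc (b + δ k) 1))).toReal := by linarith [hkey]
  have hmonoB : Monotone
      (fun k : ℕ => Icc (0:ℝ) 1 ∩ f ⁻¹' (Icc 0 (a - δ k) ∪ Icc (b + δ k) 1)) := by
    intro k m hkm
    apply inter_subset_inter_right
    apply preimage_mono
    apply union_subset_union
    · exact Icc_subset_Icc le_rfl (by linarith [hδmono hkm])
    · exact Icc_subset_Icc (by linarith [hδmono hkm]) le_rfl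
  have hUnionB : (⋃ k : ℕ, Icc (0:ℝ) 1 ∩ f ⁻¹' (Icc 0 (a - δ k) ∪ Icc (b + δ k) 1))
      = Icc (0:ℝ) 1 ∩ f ⁻¹' (Ico 0 a ∪ Ioc b 1) := by
    rw [← inter_iUnion, ← preimage_iUnion]
    have : (⋃ k : ℕ, Icc (0:ℝ) (a - δ k) ∪ Icc (b + δ k) 1) = Ico 0 a ∪ Ioc b 1 := by
      ext z
      simp only [mem_iUnion, mem_union, mem_Icc, mem_Ico, mem_Ioc]
      constructor
      · rintro ⟨k, ⟨h1, h2⟩ | ⟨h1, h2⟩⟩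
        · exact Or.inl ⟨h1, by linarith [hδ k]⟩
        · exact Or.inr ⟨by linarith [hδ k], h2⟩
      · rintro (⟨h1, h2⟩ | ⟨h1, h2⟩)
        · obtain ⟨k, hk⟩ := exists_nat_one_div_lt (sub_pos.mpr h2)
          exact ⟨k, Or.inl ⟨h1, by change δ k < a - z at hk; linarith⟩⟩
        · obtain ⟨k, hk⟩ := exists_nat_one_div_lt (sub_pos.mpr h1)
          exact ⟨k, Or.inr ⟨by change δ k < z - b at hk; linarith, h2⟩⟩
    rw [this]
  have hmIccle : volume (Icc (0:ℝ) 1 ∩ f ⁻¹' Icc a b) ≤ 1 :=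
    le_trans (measure_mono inter_subset_left) (le_of_eq hvolJ)
  have htoRealsub : (1 - volume (Icc (0:ℝ) 1 ∩ f ⁻¹' Icc a b)).toReal
      = 1 - (volume (Icc (0:ℝ) 1 ∩ f ⁻¹' Icc a b)).toReal := by
    rw [ENNReal.toReal_sub_of_le hmIccle ENNReal.one_ne_top, ENNReal.toReal_one]
  have htendB : Tendsto
      (fun k : ℕ => 1 - (volume (Icc (0:ℝ) 1 ∩ f ⁻¹'
        (Icc 0 (a - δ k) ∪ Icc (b + δ k) 1))).toReal)
      atTop (nhds (volume (Icc (0:ℝ) 1 ∩ f ⁻¹' I)).toReal) := by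
    have h := tendsto_measure_iUnion_atTop (μ := volume) hmonoB
    rw [hUnionB, hm_add] at h
    have h2 := (ENNReal.tendsto_toReal
      (hm_add ▸ hfin (Ico 0 a ∪ Ioc b 1))).comp h
    have h3 := h2.const_sub 1
    rw [htoRealsub] at h3
    have : (1 : ℝ) - (1 - (volume (Icc (0:ℝ) 1 ∩ f ⁻¹' Icc a b)).toReal)
        = (volume (Icc (0:ℝ) 1 ∩ f ⁻¹' I)).toReal := by
      rw [hm_I]; ring
    rw [this] at h3
    exact h3
  have hupper : upperDensity1 {n | x n ∈ I} ≤ (volume (Icc (0:ℝ) 1 ∩ f ⁻¹' I)).toReal :=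
    ge_of_tendsto htendB (Eventually.of_forall hupp)
  -- conclusion
  have hbd1 := dd_bddAbove {n | x n ∈ I}
  have hbd2 := dd_bddBelow {n | x n ∈ I}
  have hll : lowerDensity1 {n | x n ∈ I} ≤ upperDensity1 {n | x n ∈ I} :=
    liminf_le_limsup hbd1 hbd2
  have h1 : liminf (dd {n | x n ∈ I}) atTop = (volume (Icc (0:ℝ) 1 ∩ f ⁻¹' I)).toReal := by
    rw [← lowerDensity1_eq]
    exact le_antisymm (hll.trans hupper) hlower
  have h2 : limsup (dd {n | x n ∈ I}) atTop = (volume (Icc (0:ℝ) 1 ∩ f ⁻¹' I)).toReal := by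
    rw [← upperDensity1_eq]
    exact le_antisymm hupper (hlower.trans hll)
  unfold HasDensity1 jordanMeasure1
  exact tendsto_of_liminf_eq_limsup h1 h2 hbd1 hbd2
end

section
/- Let (y_n), (z_n), (x_n) be real sequences with y_n = z_n + x_n, z_n → z, and suppose i(x_n; A) = μ(A) for all Peano–Jordan measurable A ⊆ ℝ, where μ(A) := |g⁻¹(c⁻¹A)| for some fixed c ≠ 0 and g as above. Then i(y_n; A) = μ(A − z) for every Peano–Jordan measurable A ⊆ ℝ. More generally: if z_n → z, then for any set A, i(x_n + z_n; A + z) = i(x_n; A). -/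
open Filter Set MeasureTheory
open scoped Classical Pointwise

/-- Chebyshev nodes of the second kind: `x_{n,k} = cos((k-1)π/(n-1))`, `k = 1,…,n`. -/
noncomputable def chebNode (n k : ℕ) : ℝ :=
  Real.cos (((k : ℝ) - 1) * Real.pi / ((n : ℝ) - 1))

/-- Fundamental Lagrange polynomial at the Chebyshev nodes of second kind. -/
noncomputable def lagBasis (n k : ℕ) (x : ℝ) : ℝ :=
  ∏ i ∈ (Finset.Icc 1 n).erase k, (x - chebNode n i) / (chebNode n k - chebNode n i)

/-- Lagrange interpolation operator at the `n` Chebyshev nodes of the second kind. -/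
noncomputable def lagrangeOp (n : ℕ) (f : ℝ → ℝ) (x : ℝ) : ℝ :=
  ∑ k ∈ Finset.Icc 1 n, lagBasis n k x * f (chebNode n k)

/-- The step function `h_{x₀,d}`. -/
noncomputable def stepFun (x₀ d : ℝ) : ℝ → ℝ :=
  fun x => if x < x₀ then 0 else if x = x₀ then d else 1

/-- The function `g(x) = (sin πx / π) · Σ_{n≥0} (-1)ⁿ/(n+x)`. -/
noncomputable def lerchg (x : ℝ) : ℝ :=
  Real.sin (Real.pi * x) / Real.pi * ∑' n : ℕ, (-1 : ℝ) ^ n / ((n : ℝ) + x)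

section AUXX

private lemma seq_nonneg (K : Set ℕ) (n : ℕ) :
    0 ≤ (((Finset.Icc 1 n).filter (fun k => k ∈ K)).card : ℝ) / (n : ℝ) := by
  positivity

private lemma seq_le_one (K : Set ℕ) (n : ℕ) :
    (((Finset.Icc 1 n).filter (fun k => k ∈ K)).card : ℝ) / (n : ℝ) ≤ 1 := by
  rcases Nat.eq_zero_or_pos n with h | h
  · simp [h]
  · rw [div_le_one (by exact_mod_cast h)]
    have : ((Finset.Icc 1 n).filter (fun k => k ∈ K)).card ≤ n := by
      calc _ ≤ (Finset.Icc 1 n).card := Finset.card_filter_le _ _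
        _ = n := by rw [Nat.card_Icc]; omega
    exact_mod_cast this

private lemma ud_bddAbove (K : Set ℕ) :
    IsBoundedUnder (· ≤ ·) atTop (fun n : ℕ =>
      (((Finset.Icc 1 n).filter (fun k => k ∈ K)).card : ℝ) / (n : ℝ)) :=
  isBoundedUnder_of ⟨1, fun n => seq_le_one K n⟩

private lemma ud_cobdd (K : Set ℕ) :
    IsCoboundedUnder (· ≤ ·) atTop (fun n : ℕ =>
      (((Finset.Icc 1 n).filter (fun k => k ∈ K)).card : ℝ) / (n : ℝ)) :=
  IsBoundedUnder.isCoboundedUnder_le (isBoundedUnder_of ⟨0, fun n => seq_nonneg K n⟩)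

private lemma ud_le_one (K : Set ℕ) : upperDensity1 K ≤ 1 :=
  limsup_le_of_le (ud_cobdd K) (Eventually.of_forall (seq_le_one K))

private lemma ud_nonneg (K : Set ℕ) : 0 ≤ upperDensity1 K :=
  le_limsup_of_frequently_le (Frequently.of_forall (seq_nonneg K)) (ud_bddAbove K)

private lemma ud_mono_ev {K K' : Set ℕ} (h : ∀ᶠ n in atTop, n ∈ K → n ∈ K') :
    upperDensity1 K ≤ upperDensity1 K' := by
  obtain ⟨N, hN⟩ := eventually_atTop.mp h
  by_contra hcon
  push_neg at hcon
  set δ : ℝ := (upperDensity1 K - upperDensity1 K') / 2 with hδdef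
  have hδ : 0 < δ := by simp only [hδdef]; linarith
  have hkey : upperDensity1 K ≤ upperDensity1 K' + δ := by
    have hev : ∀ᶠ n in atTop,
        (((Finset.Icc 1 n).filter (fun k => k ∈ K)).card : ℝ) / (n : ℝ)
          ≤ (((Finset.Icc 1 n).filter (fun k => k ∈ K')).card : ℝ) / (n : ℝ) + δ := by
      filter_upwards [eventually_ge_atTop (max 1 ⌈(N : ℝ) / δ⌉₊)] with n hn
      have hn1 : 1 ≤ n := le_trans (le_max_left _ _) hn
      have hnpos : (0:ℝ) < n := by exact_mod_cast hn1
      have hsub : (Finset.Icc 1 n).filter (fun k => k ∈ K) ⊆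
          ((Finset.Icc 1 n).filter (fun k => k ∈ K')) ∪ Finset.Icc 1 N := by
        intro k hk
        rw [Finset.mem_filter] at hk
        rcases le_or_gt k N with hkN | hkN
        · exact Finset.mem_union_right _ (Finset.mem_Icc.mpr
            ⟨(Finset.mem_Icc.mp hk.1).1, hkN⟩)
        · exact Finset.mem_union_left _ (Finset.mem_filter.mpr ⟨hk.1, hN k hkN.le hk.2⟩)
      have hcard : (((Finset.Icc 1 n).filter (fun k => k ∈ K)).card : ℝ)
          ≤ (((Finset.Icc 1 n).filter (fun k => k ∈ K')).card : ℝ) + N := by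
        have := (Finset.card_le_card hsub).trans (Finset.card_union_le _ _)
        have hI : (Finset.Icc 1 N).card = N := by rw [Nat.card_Icc]; omega
        rw [hI] at this
        exact_mod_cast this
      have hNn : (N : ℝ) / n ≤ δ := by
        rw [div_le_iff₀ hnpos]
        have h2 : (⌈(N : ℝ) / δ⌉₊ : ℝ) ≤ n := by
          exact_mod_cast le_trans (le_max_right _ _) hn
        have h3 : (N : ℝ) / δ ≤ n := le_trans (Nat.le_ceil _) h2
        calc (N : ℝ) = δ * ((N:ℝ)/δ) := by field_simp
          _ ≤ δ * n := by nlinarith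
      calc (((Finset.Icc 1 n).filter (fun k => k ∈ K)).card : ℝ) / (n : ℝ)
          ≤ ((((Finset.Icc 1 n).filter (fun k => k ∈ K')).card : ℝ) + N) / n := by
            gcongr
        _ = (((Finset.Icc 1 n).filter (fun k => k ∈ K')).card : ℝ) / n + (N:ℝ)/n := by ring
        _ ≤ _ := by linarith
    calc upperDensity1 K ≤ limsup (fun n : ℕ =>
          (((Finset.Icc 1 n).filter (fun k => k ∈ K')).card : ℝ) / (n : ℝ) + δ) atTop := by
          exact limsup_le_limsup hev (ud_cobdd K)
            (isBoundedUnder_of ⟨1 + δ, fun n => by linarith [seq_le_one K' n]⟩)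
      _ = upperDensity1 K' + δ :=
          limsup_add_const atTop _ δ (ud_bddAbove K') (ud_cobdd K')
  simp only [hδdef] at hkey
  linarith

private lemma iSup_half_le {f g : ℝ → ℝ} (hf1 : ∀ ε, f ε ≤ 1)
    (hg0 : ∀ ε, 0 ≤ g ε) (hg1 : ∀ ε, g ε ≤ 1) (h : ∀ ε > 0, f ε ≤ g (ε / 2)) :
    (⨆ ε > (0:ℝ), f ε) ≤ ⨆ ε > (0:ℝ), g ε := by
  have hbdd : BddAbove (Set.range fun ε : ℝ => ⨆ _ : ε > (0:ℝ), g ε) := by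
    refine ⟨1, ?_⟩
    rintro _ ⟨ε, rfl⟩
    exact Real.iSup_le (fun _ => hg1 ε) zero_le_one
  have hsg0 : 0 ≤ ⨆ ε > (0:ℝ), g ε :=
    Real.iSup_nonneg fun ε => Real.iSup_nonneg fun _ => hg0 ε
  refine Real.iSup_le (fun ε => Real.iSup_le (fun hε => ?_) hsg0) hsg0
  calc f ε ≤ g (ε / 2) := h ε hε
    _ = ⨆ _ : ε / 2 > (0:ℝ), g (ε / 2) := (ciSup_pos (f := fun _ => g (ε / 2)) (half_pos hε)).symm
    _ ≤ ⨆ ε > (0:ℝ), g ε := le_ciSup hbdd (ε / 2)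



private lemma key_lemma (x' zn' : ℕ → ℝ) (z' : ℝ)
    (hz' : Tendsto zn' atTop (nhds z')) (A : Set ℝ) :
    idxSet1 (fun n => x' n + zn' n) ((fun a => a + z') '' A) = idxSet1 x' A := by
  have hdrift : ∀ ε : ℝ, 0 < ε → ∀ᶠ n in atTop, |zn' n - z'| < ε := by
    intro ε hε
    obtain ⟨N, hN⟩ := Metric.tendsto_atTop.mp hz' ε hε
    exact eventually_atTop.mpr ⟨N, fun n hn => by
      simpa [Real.dist_eq] using hN n hn⟩
  have ev1 : ∀ ε : ℝ, 0 < ε → ∀ᶠ n in atTop,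
      n ∈ {n | x' n + zn' n ∉ ((fun a => a + z') '' A) + Set.Ioo (-ε) ε} →
      n ∈ {n | x' n ∉ A + Set.Ioo (-(ε/2)) (ε/2)} := by
    intro ε hε
    filter_upwards [hdrift (ε/2) (half_pos hε)] with n hd
    intro hnot
    intro hxin
    apply hnot
    obtain ⟨a, ha, b, hb, hab⟩ := Set.mem_add.mp hxin
    simp only [Set.mem_Ioo] at hb
    have habs := abs_lt.mp hd
    refine Set.mem_add.mpr ⟨a + z', ⟨a, ha, rfl⟩, b + (zn' n - z'),
      Set.mem_Ioo.mpr ⟨by linarith, by linarith⟩, by linarith⟩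
  have ev2 : ∀ ε : ℝ, 0 < ε → ∀ᶠ n in atTop,
      n ∈ {n | x' n ∉ A + Set.Ioo (-ε) ε} →
      n ∈ {n | x' n + zn' n ∉ ((fun a => a + z') '' A) + Set.Ioo (-(ε/2)) (ε/2)} := by
    intro ε hε
    filter_upwards [hdrift (ε/2) (half_pos hε)] with n hd
    intro hnot
    intro hxin
    apply hnot
    obtain ⟨a', ha', b, hb, hab⟩ := Set.mem_add.mp hxin
    obtain ⟨a, ha, rfl⟩ := ha'
    simp only [Set.mem_Ioo] at hb
    have habs := abs_lt.mp hd
    have hab' : a + z' + b = x' n + zn' n := hab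
    refine Set.mem_add.mpr ⟨a, ha, b - (zn' n - z'),
      Set.mem_Ioo.mpr ⟨by linarith, by linarith⟩, by linarith [hab']⟩
  unfold idxSet1
  congr 1
  apply le_antisymm
  · exact iSup_half_le
      (fun ε => ud_le_one _) (fun ε => ud_nonneg _) (fun ε => ud_le_one _)
      (fun ε hε => ud_mono_ev (ev1 ε hε))
  · exact iSup_half_le
      (fun ε => ud_le_one _) (fun ε => ud_nonneg _) (fun ε => ud_le_one _)
      (fun ε hε => ud_mono_ev (ev2 ε hε))


end AUXX

theorem index_translation (x y zn : ℕ → ℝ) (z c : ℝ) (hc : c ≠ 0)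
    (hy : ∀ n, y n = zn n + x n) (hz : Tendsto zn atTop (nhds z))
    (hidx : ∀ A : Set ℝ, JordanMeasurable1 A →
      idxSet1 x A = jordanMeasure1 (Set.Ioo 0 1 ∩ {t | c * lerchg t ∈ A})) :
    (∀ A : Set ℝ, JordanMeasurable1 A →
      idxSet1 y A =
        jordanMeasure1 (Set.Ioo 0 1 ∩ {t | c * lerchg t ∈ (fun a => a - z) '' A})) ∧
    (∀ (x' zn' : ℕ → ℝ) (z' : ℝ), Tendsto zn' atTop (nhds z') →
      ∀ A : Set ℝ,
        idxSet1 (fun n => x' n + zn' n) ((fun a => a + z') '' A) = idxSet1 x' A) := by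
  refine ⟨?_, fun x' zn' z' hz' A => key_lemma x' zn' z' hz' A⟩
  intro A hA
  set B : Set ℝ := (fun a => a - z) '' A with hBdef
  have himg : (fun a => a - z) '' A = (fun a => a + z) ⁻¹' A := by
    ext b
    constructor
    · rintro ⟨a, ha, rfl⟩; simpa using ha
    · intro hb; exact ⟨b + z, hb, by ring⟩
  have hB : JordanMeasurable1 B := by
    constructor
    · obtain ⟨C, hC⟩ := isBounded_iff_forall_norm_le.mp hA.1
      refine isBounded_iff_forall_norm_le.mpr ⟨C + |z|, ?_⟩
      rintro _ ⟨a, ha, rfl⟩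
      calc ‖a - z‖ ≤ ‖a‖ + ‖z‖ := norm_sub_le _ _
        _ ≤ C + |z| := by have := hC a ha; simp only [Real.norm_eq_abs] at *; linarith
    · have hfr : frontier B = (fun a => a - z) '' frontier A := by
        rw [hBdef]
        have : (fun a : ℝ => a - z) = (Homeomorph.subRight z : ℝ → ℝ) := rfl
        rw [this, (Homeomorph.subRight z).image_frontier]
      rw [hfr]
      rw [show (fun a : ℝ => a - z) '' frontier A = (fun a => a + z) ⁻¹' frontier A by
        ext b
        constructor
        · rintro ⟨a, ha, rfl⟩; simpa using ha
        · intro hb; exact ⟨b + z, hb, by ring⟩]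
      rw [measure_preimage_add_right volume z (frontier A)]
      exact hA.2
  have e0 : y = fun n => x n + zn n := funext fun n => by rw [hy n, add_comm]
  have e2 : ((fun a => a + z) '' B) = A := by
    rw [hBdef, Set.image_image]
    simp
  have := key_lemma x zn z hz B
  rw [e2] at this
  rw [e0, this]
  exact hidx B hB
end
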